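/- In the ring R = k[x₁, x₂, …, y]/(x_i x_j, y^i x_i : i, j ≥ 1), for every k ≥ 1 one has y^k x_{k+1} ≠ 0; hence y^k · t(R) ≠ 0 for every k ≥ 1, i.e. no power of y annihilates the y-power torsion submodule t(R) (t(R) is not bounded with respect to the filter of ideals of R containing a power of (y)). -/

import Mathlib

open MvPolynomial

set_option maxHeartbeats 1000000
set_option synthInstance.maxHeartbeats 400000

noncomputable section

/-- The polynomial ring `k[x₁, x₂, …, y]`, with `y` the variable `none` and `xₙ` (`n ≥ 1`)
the variable `some n`. -/
abbrev PolyR (k : Type) [Field k] : Type := MvPolynomial (Option ℕ+) k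

/-- The variable `y`. -/
def yP (k : Type) [Field k] : PolyR k := X none

/-- The variable `xₙ`, for `n ≥ 1`. -/
def xP (k : Type) [Field k] (n : ℕ+) : PolyR k := X (some n)

/-- The set of relations `xᵢxⱼ` (`i, j ≥ 1`) and `yⁱxᵢ` (`i ≥ 1`). -/
def relSet (k : Type) [Field k] : Set (PolyR k) :=
  {p | (∃ i j : ℕ+, p = xP k i * xP k j) ∨ (∃ i : ℕ+, p = yP k ^ (i : ℕ) * xP k i)}

/-- The ring `R = k[x₁, x₂, …, y]/(xᵢxⱼ, yⁱxᵢ : i, j ≥ 1)`. -/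
abbrev Rg (k : Type) [Field k] : Type := PolyR k ⧸ Ideal.span (relSet k)

/-- The image of `y` in `R`. -/
def yR (k : Type) [Field k] : Rg k := Ideal.Quotient.mk _ (yP k)

/-- The image of `xₙ` in `R`. -/
def xR (k : Type) [Field k] (n : ℕ+) : Rg k := Ideal.Quotient.mk _ (xP k n)

/-- The `y`-power torsion submodule `t(R) = {r ∈ R : yᵏ r = 0 for some k ≥ 0}`. -/
def tR (k : Type) [Field k] : Submodule (Rg k) (Rg k) :=
  Submodule.torsion' (Rg k) (Rg k) (Submonoid.powers (yR k))

end

noncomputable section Aux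

variable (k : Type) [Field k] (m : ℕ+)

/-- Target module: `k[y]/(y^{m+1})`. -/
abbrev Mod' : Type := Polynomial k ⧸ Ideal.span {(Polynomial.X : Polynomial k) ^ ((m : ℕ) + 1)}

/-- Target ring: square-zero extension `k[y] ⋉ k[y]/(y^{m+1})`. -/
abbrev Tgt : Type := TrivSqZeroExt (Polynomial k) (Mod' k m)

/-- The evaluation sending `y ↦ (y, 0)`, `x_{m+1} ↦ (0, 1)`, other `xᵢ ↦ 0`. -/
def evalFun : Option ℕ+ → Tgt k m
  | none => TrivSqZeroExt.inl Polynomial.X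
  | some n => if n = m + 1 then TrivSqZeroExt.inr 1 else 0

lemma aeval_rel_zero : ∀ p ∈ relSet k, (aeval (evalFun k m)) p = 0 := by
  rintro p (⟨i, j, rfl⟩ | ⟨i, rfl⟩)
  · simp only [map_mul, xP, aeval_X, evalFun]
    split_ifs <;> simp
  · simp only [map_mul, map_pow, yP, xP, aeval_X, evalFun]
    split_ifs with h
    · subst h
      rw [TrivSqZeroExt.inl_pow, TrivSqZeroExt.inl_mul_inr]
      convert TrivSqZeroExt.inr_zero (Polynomial k)
      · rfl
      have : (Ideal.Quotient.mk (Ideal.span {(Polynomial.X : Polynomial k) ^ ((m : ℕ) + 1)}))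
          ((Polynomial.X : Polynomial k) ^ ((m : ℕ) + 1)) = 0 := by
        rw [Ideal.Quotient.eq_zero_iff_mem]
        exact Ideal.mem_span_singleton_self _
      calc (Polynomial.X : Polynomial k) ^ ((↑(m + 1) : ℕ)) • (1 : Mod' k m)
          = (Ideal.Quotient.mk _) ((Polynomial.X : Polynomial k) ^ ((m : ℕ) + 1)) := by
            rw [← Algebra.algebraMap_eq_smul_one, Ideal.Quotient.algebraMap_eq]; norm_cast
        _ = 0 := this
    · simp

lemma key_ne : yR k ^ (m : ℕ) * xR k (m + 1) ≠ 0 := by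
  intro h
  have hmem : yP k ^ (m : ℕ) * xP k (m + 1) ∈ Ideal.span (relSet k) := by
    rw [← Ideal.Quotient.eq_zero_iff_mem]
    rw [yR, xR] at h
    rw [← map_pow, ← map_mul] at h
    exact h
  have hspan : Ideal.span (relSet k) ≤ RingHom.ker (aeval (evalFun k m)).toRingHom := by
    rw [Ideal.span_le]
    intro p hp
    exact aeval_rel_zero k m p hp
  have h0 : (aeval (evalFun k m)) (yP k ^ (m : ℕ) * xP k (m + 1)) = 0 := hspan hmem
  rw [map_mul, map_pow, yP, xP, aeval_X, aeval_X] at h0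
  simp only [evalFun, if_pos rfl, if_true] at h0
  rw [TrivSqZeroExt.inl_pow, TrivSqZeroExt.inl_mul_inr] at h0
  have h1 : ((Polynomial.X : Polynomial k) ^ (m : ℕ)) • (1 : Mod' k m) = 0 := by
    have := congrArg TrivSqZeroExt.snd h0
    simpa using this
  rw [← Algebra.algebraMap_eq_smul_one, Ideal.Quotient.algebraMap_eq,
    Ideal.Quotient.eq_zero_iff_mem, Ideal.mem_span_singleton] at h1
  have := (Polynomial.X_pow_dvd_iff.mp h1) (m : ℕ) (Nat.lt_succ_self _)
  simp [Polynomial.coeff_X_pow] at this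

end Aux

/-- In `R = k[x₁, x₂, …, y]/(xᵢxⱼ, yⁱxᵢ)`, for every `m ≥ 1` one has
`yᵐ x_{m+1} ≠ 0`; hence `yᵐ · t(R) ≠ 0` for every `m ≥ 1`, i.e. no power of `y` annihilates
the `y`-power torsion submodule `t(R)`. -/
theorem stmt_11 (k : Type) [Field k] :
    (∀ m : ℕ+, yR k ^ (m : ℕ) * xR k (m + 1) ≠ 0) ∧
    (∀ m : ℕ+, ∃ r ∈ tR k, yR k ^ (m : ℕ) * r ≠ 0) := by
  refine ⟨fun m => key_ne k m, fun m => ⟨xR k (m + 1), ?_, key_ne k m⟩⟩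
  refine ⟨⟨yR k ^ ((↑(m + 1) : ℕ)), ⟨(↑(m + 1) : ℕ), rfl⟩⟩, ?_⟩
  show yR k ^ ((↑(m + 1) : ℕ)) • xR k (m + 1) = 0
  rw [smul_eq_mul, yR, xR, ← map_pow, ← map_mul, Ideal.Quotient.eq_zero_iff_mem]
  exact Ideal.subset_span (Or.inr ⟨m + 1, rfl⟩)
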